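/- If t →_G t' for ground terms t, t' of a HORS G, then the value trees of the schemes started at t and t' coincide: ‖G_t‖ = ‖G_{t'}‖. -/

import Mathlib

/-- Simple types: ground type `o` and arrows. -/
inductive Ty : Type
  | o : Ty
  | arr : Ty → Ty → Ty
deriving DecidableEq

namespace Ty

/-- order(o)=0, order(τ₁→τ₂)=max(order τ₁ + 1, order τ₂). -/
def order : Ty → ℕ
  | .o => 0
  | .arr a b => max (a.order + 1) b.order

/-- The list τ₁,...,τ_k such that τ = τ₁ → ... → τ_k → o. -/
def args : Ty → List Ty
  | .o => []
  | .arr a b => a :: b.args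

/-- The arity of a type. -/
def arity (τ : Ty) : ℕ := τ.args.length

/-- The over-bar transformation: ō = o→o, (τ₁→τ₂)̄ = τ̄₁→τ̄₂. -/
def bar : Ty → Ty
  | .o => .arr .o .o
  | .arr a b => .arr a.bar b.bar

end Ty

/-- Applicative terms over a typed alphabet. -/
inductive Tm (α : Type) : Type
  | sym : α → Tm α
  | app : Tm α → Tm α → Tm α

/-- Typing judgment for terms over a typed alphabet. -/
inductive HasType {α : Type} (ty : α → Ty) : Tm α → Ty → Prop
  | sym (a : α) : HasType ty (.sym a) (ty a)
  | app {t s : Tm α} {τ' τ : Ty} :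
      HasType ty t (.arr τ' τ) → HasType ty s τ' → HasType ty (.app t s) τ

/-- `mkApp h [t₁,...,t_k] = h t₁ ... t_k`. -/
def mkApp {α : Type} (h : Tm α) (ts : List (Tm α)) : Tm α := ts.foldl .app h

/-- Subterm relation. -/
inductive Subt {α : Type} : Tm α → Tm α → Prop
  | refl (t : Tm α) : Subt t t
  | appL {s t u : Tm α} : Subt s t → Subt s (.app t u)
  | appR {s t u : Tm α} : Subt s u → Subt s (.app t u)
/-- The typing environment for a rule body with variables of types given by
the argument types of τ. -/
def ruleEnv (Sig Nt : Type) (sigTy : Sig → Ty) (ntTy : Nt → Ty) (τ : Ty) :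
    Sig ⊕ Nt ⊕ Fin τ.arity → Ty
  | .inl a => sigTy a
  | .inr (.inl F) => ntTy F
  | .inr (.inr i) => τ.args.get i

/-- A higher-order recursion scheme. -/
structure HORS where
  /-- terminal symbols -/
  Sig : Type
  sigTy : Sig → Ty
  sigOrder : ∀ a, (sigTy a).order ≤ 1
  /-- non-terminal symbols -/
  Nt : Type
  ntTy : Nt → Ty
  /-- the rewrite rule for each non-terminal `F x₁ ... x_k → e` given by its
  right-hand side, a term over terminals, non-terminals and the variables. -/
  rule : (F : Nt) → Option (Tm (Sig ⊕ Nt ⊕ Fin (ntTy F).arity))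
  ruleTyped : ∀ (F : Nt) (e : Tm (Sig ⊕ Nt ⊕ Fin (ntTy F).arity)), rule F = some e →
    HasType (ruleEnv Sig Nt sigTy ntTy (ntTy F)) e .o
  /-- initial non-terminal -/
  S : Nt
  S_ty : ntTy S = .o

namespace HORS

variable (G : HORS)

/-- Closed (rule-free) terms over terminals and non-terminals. -/
abbrev T : Type := Tm (G.Sig ⊕ G.Nt)

/-- Typing of closed symbols. -/
def symTy : G.Sig ⊕ G.Nt → Ty
  | .inl a => G.sigTy a
  | .inr F => G.ntTy F

/-- Instantiation of a rule body with actual arguments. -/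
def inst {k : ℕ} : Tm (G.Sig ⊕ G.Nt ⊕ Fin k) → (Fin k → G.T) → G.T
  | .sym (.inl a), _ => .sym (.inl a)
  | .sym (.inr (.inl F)), _ => .sym (.inr F)
  | .sym (.inr (.inr i)), ts => ts i
  | .app t s, ts => .app (inst t ts) (inst s ts)

/-- A redex: a fully applied non-terminal possessing a rewrite rule. -/
def IsRedex (t : G.T) : Prop :=
  ∃ (F : G.Nt) (ts : List G.T),
    t = mkApp (.sym (.inr F)) ts ∧ ts.length = (G.ntTy F).arity ∧ (G.rule F).isSome

/-- A term contains a redex. -/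
def HasRedex (t : G.T) : Prop := ∃ s, Subt s t ∧ G.IsRedex s

/-- Unrestricted rewriting. -/
inductive Step : G.T → G.T → Prop
  | head {F : G.Nt} {ts : List G.T} {e} (hr : G.rule F = some e)
      (hl : ts.length = (G.ntTy F).arity) :
      Step (mkApp (.sym (.inr F)) ts) (G.inst e (fun i => ts.get (Fin.cast hl.symm i)))
  | appL {t t' s : G.T} : Step t t' → Step (.app t s) (.app t' s)
  | appR {t s s' : G.T} : Step s s' → Step (.app t s) (.app t s')

/-- Innermost-outermost rewriting: the arguments of the contracted redex
contain no redex. -/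
inductive StepIO : G.T → G.T → Prop
  | head {F : G.Nt} {ts : List G.T} {e} (hr : G.rule F = some e)
      (hl : ts.length = (G.ntTy F).arity) (hio : ∀ s ∈ ts, ¬ G.HasRedex s) :
      StepIO (mkApp (.sym (.inr F)) ts) (G.inst e (fun i => ts.get (Fin.cast hl.symm i)))
  | appL {t t' s : G.T} : StepIO t t' → StepIO (.app t s) (.app t' s)
  | appR {t s s' : G.T} : StepIO s s' → StepIO (.app t s) (.app t s')

/-- Outermost-innermost rewriting: no redex strictly contains the contracted redex. -/
inductive StepOI : G.T → G.T → Prop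
  | head {F : G.Nt} {ts : List G.T} {e} (hr : G.rule F = some e)
      (hl : ts.length = (G.ntTy F).arity) :
      StepOI (mkApp (.sym (.inr F)) ts) (G.inst e (fun i => ts.get (Fin.cast hl.symm i)))
  | appL {t t' s : G.T} : ¬ G.IsRedex (.app t s) → StepOI t t' → StepOI (.app t s) (.app t' s)
  | appR {t s s' : G.T} : ¬ G.IsRedex (.app t s) → StepOI s s' → StepOI (.app t s) (.app t s')

/-- Terms accessible from the initial non-terminal by unrestricted derivations. -/
def Acc' : Set G.T := {t | Relation.ReflTransGen G.Step (.sym (.inr G.S)) t}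

/-- Terms accessible by IO derivations. -/
def AccIO : Set G.T := {t | Relation.ReflTransGen G.StepIO (.sym (.inr G.S)) t}

/-- Terms accessible by OI derivations. -/
def AccOI : Set G.T := {t | Relation.ReflTransGen G.StepOI (.sym (.inr G.S)) t}

end HORS

/-- Possibly infinite trees over Σ ∪ {⊥}, as partial labelings of positions;
`some none` is the label ⊥, `some (some a)` the label a ∈ Σ. -/
def LTree (σ : Type) : Type := List ℕ → Option (Option σ)

/-- The approximation order on trees. -/
def TLe {σ : Type} (t t' : LTree σ) : Prop :=
  ∀ u x, t u = some x → ∃ y, t' u = some y ∧ (x = none ∨ y = x)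

/-- `v` is the least upper bound of the set `A` of trees. -/
def IsTreeLub {σ : Type} (A : Set (LTree σ)) (v : LTree σ) : Prop :=
  (∀ t ∈ A, TLe t v) ∧ ∀ w, (∀ t ∈ A, TLe t w) → TLe v w

/-- Number of arguments in the application spine. -/
def Tm.nArgs {α : Type} : Tm α → ℕ
  | .sym _ => 0
  | .app t _ => t.nArgs + 1

namespace HORS

variable (G : HORS)

/-- The ⊥-transformation: the tree obtained from a term by replacing maximal
non-terminal-headed subterms with ⊥. -/
def bt : G.T → LTree G.Sig
  | .sym (.inl a) => fun u => if u = [] then some (some a) else none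
  | .sym (.inr _) => fun u => if u = [] then some none else none
  | .app t s => fun u =>
      match bt t [] with
      | some (some _) =>
          match u with
          | [] => bt t []
          | j :: v => if j = t.nArgs then bt s v else bt t u
      | _ => if u = [] then some none else none

end HORS

namespace Tm
variable {α : Type}

def headSym : Tm α → α
  | .sym a => a
  | .app t _ => t.headSym

def argsL : Tm α → List (Tm α)
  | .sym _ => []
  | .app t s => t.argsL ++ [s]

end Tm

lemma mkApp_cons {α : Type} (h a : Tm α) (ts : List (Tm α)) :
    mkApp h (a :: ts) = mkApp (.app h a) ts := rfl

lemma mkApp_concat {α : Type} (h r : Tm α) (ts : List (Tm α)) :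
    mkApp h (ts ++ [r]) = .app (mkApp h ts) r := by
  simp [mkApp, List.foldl_append]

lemma argsL_mkApp {α : Type} (h : Tm α) (ts : List (Tm α)) :
    (mkApp h ts).argsL = h.argsL ++ ts := by
  induction ts generalizing h with
  | nil => simp [mkApp, Tm.argsL]
  | cons a ts ih => rw [mkApp_cons, ih]; simp [Tm.argsL]

lemma headSym_mkApp {α : Type} (h : Tm α) (ts : List (Tm α)) :
    (mkApp h ts).headSym = h.headSym := by
  induction ts generalizing h with
  | nil => rfl
  | cons a ts ih => rw [mkApp_cons, ih]; rfl

lemma spine_eta {α : Type} (t : Tm α) : mkApp (.sym t.headSym) t.argsL = t := by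
  induction t with
  | sym a => rfl
  | app t s iht ihs =>
      rw [Tm.argsL, Tm.headSym, mkApp_concat, iht]

lemma mkApp_sym_inj {α : Type} {a b : α} {ts us : List (Tm α)}
    (h : mkApp (.sym a) ts = mkApp (.sym b) us) : a = b ∧ ts = us := by
  have h1 := congrArg Tm.headSym h
  have h2 := congrArg Tm.argsL h
  simp [headSym_mkApp, argsL_mkApp, Tm.headSym, Tm.argsL] at h1 h2
  exact ⟨h1, h2⟩

lemma sizeOf_le_mkApp {α : Type} [SizeOf α] (h : Tm α) (ts : List (Tm α)) :
    sizeOf h ≤ sizeOf (mkApp h ts) := by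
  induction ts generalizing h with
  | nil => exact le_refl _
  | cons a ts ih =>
      rw [mkApp_cons]
      calc sizeOf h ≤ sizeOf (Tm.app h a) := by
              have : sizeOf (Tm.app h a) = 1 + sizeOf h + sizeOf a := by simp
              omega
        _ ≤ _ := ih _

lemma sizeOf_lt_mkApp {α : Type} [SizeOf α] {x : Tm α} {ts : List (Tm α)} (hx : x ∈ ts) (h : Tm α) :
    sizeOf x < sizeOf (mkApp h ts) := by
  induction ts generalizing h with
  | nil => cases hx
  | cons a ts ih =>
      rw [mkApp_cons]
      rcases List.mem_cons.mp hx with rfl | hx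
      · calc sizeOf x < sizeOf (Tm.app h x) := by
              have : sizeOf (Tm.app h x) = 1 + sizeOf h + sizeOf x := by simp
              omega
          _ ≤ _ := sizeOf_le_mkApp _ _
      · exact ih hx _
namespace HORS

variable (G : HORS)

/-- Parallel reduction. -/
inductive Par : G.T → G.T → Prop
  | sym (a) : Par (.sym a) (.sym a)
  | app {t t' s s'} : Par t t' → Par s s' → Par (.app t s) (.app t' s')
  | head {F : G.Nt} {ts : List G.T} {e} (us : Fin (G.ntTy F).arity → G.T)
      (hr : G.rule F = some e) (hl : ts.length = (G.ntTy F).arity)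
      (h : ∀ i, Par (ts.get (Fin.cast hl.symm i)) (us i)) :
      Par (mkApp (.sym (.inr F)) ts) (G.inst e us)

variable {G}

lemma Par.refl : ∀ t : G.T, G.Par t t
  | .sym a => .sym a
  | .app t s => .app (Par.refl t) (Par.refl s)

lemma Step.toPar {t t' : G.T} (h : G.Step t t') : G.Par t t' := by
  induction h with
  | head hr hl => exact Par.head _ hr hl fun i => Par.refl _
  | appL _ ih => exact Par.app ih (Par.refl _)
  | appR _ ih => exact Par.app (Par.refl _) ih

lemma step_mkApp {h h' : G.T} (s : G.Step h h') (ts : List G.T) :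
    G.Step (mkApp h ts) (mkApp h' ts) := by
  induction ts generalizing h h' with
  | nil => exact s
  | cons a ts ih => rw [mkApp_cons, mkApp_cons]; exact ih (Step.appL s)

lemma rtg_appL {t t' s : G.T} (h : Relation.ReflTransGen G.Step t t') :
    Relation.ReflTransGen G.Step (.app t s) (.app t' s) :=
  Relation.ReflTransGen.lift (fun x => Tm.app x s) (fun _ _ => Step.appL) _ _ h

lemma rtg_appR {t s s' : G.T} (h : Relation.ReflTransGen G.Step s s') :
    Relation.ReflTransGen G.Step (.app t s) (.app t s') :=
  Relation.ReflTransGen.lift (fun x => Tm.app t x) (fun _ _ => Step.appR) _ _ h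

lemma rtg_mkApp_head {h h' : G.T} (s : Relation.ReflTransGen G.Step h h') (ts : List G.T) :
    Relation.ReflTransGen G.Step (mkApp h ts) (mkApp h' ts) :=
  Relation.ReflTransGen.lift (fun x => mkApp x ts) (fun _ _ hs => step_mkApp hs ts) _ _ s

lemma rtg_mkApp {ts us : List G.T} (h : List.Forall₂ (Relation.ReflTransGen G.Step) ts us) :
    ∀ hd : G.T, Relation.ReflTransGen G.Step (mkApp hd ts) (mkApp hd us) := by
  induction h with
  | nil => exact fun _ => .refl
  | cons hab htail ih =>
      intro hd
      rw [mkApp_cons, mkApp_cons]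
      exact (rtg_mkApp_head (rtg_appR hab) _).trans (ih _)

lemma Par.toRTG {t t' : G.T} (h : G.Par t t') : Relation.ReflTransGen G.Step t t' := by
  induction h with
  | sym a => exact .refl
  | app _ _ ih1 ih2 => exact (rtg_appL ih1).trans (rtg_appR ih2)
  | @head F ts e us hr hl h ih =>
      have hlen : ts.length = (List.ofFn us).length := by simp [hl]
      have hfa : List.Forall₂ (Relation.ReflTransGen G.Step) ts (List.ofFn us) := by
        rw [List.forall₂_iff_get]
        refine ⟨hlen, fun i h1 h2 => ?_⟩
        have := ih ⟨i, by omega⟩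
        simpa [List.get_ofFn] using this
      refine (rtg_mkApp hfa _).trans (Relation.ReflTransGen.single ?_)
      have hl' : (List.ofFn us).length = (G.ntTy F).arity := by simp
      have := Step.head (G := G) (ts := List.ofFn us) hr hl'
      convert this using 2
      funext i
      simp [List.get_ofFn]

end HORS
namespace HORS

variable {G : HORS}

lemma inst_par {k : ℕ} (e : Tm (G.Sig ⊕ G.Nt ⊕ Fin k)) {f g : Fin k → G.T}
    (h : ∀ i, G.Par (f i) (g i)) : G.Par (G.inst e f) (G.inst e g) := by
  induction e with
  | sym a =>
      rcases a with a | F | i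
      · exact Par.refl _
      · exact Par.refl _
      · exact h i
  | app t s iht ihs => exact Par.app iht ihs

lemma par_spine {w u : G.T} (hp : G.Par w u) :
    ∀ {a : G.Sig ⊕ G.Nt} {ts : List G.T},
    w = mkApp (.sym a) ts →
    (∀ F, a = .inr F → ts.length ≤ (G.ntTy F).arity) →
    (∃ us, List.Forall₂ G.Par ts us ∧ u = mkApp (.sym a) us) ∨
    (∃ F, a = .inr F ∧ ∃ (e : _) (hl : ts.length = (G.ntTy F).arity) (us : Fin (G.ntTy F).arity → G.T),
      G.rule F = some e ∧ (∀ i, G.Par (ts.get (Fin.cast hl.symm i)) (us i)) ∧ u = G.inst e us) := by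
  induction hp with
  | sym b =>
      intro a ts heq _
      have h2 := congrArg Tm.argsL heq
      simp [argsL_mkApp, Tm.argsL] at h2
      subst h2
      have : Tm.sym b = Tm.sym a := heq
      injection this with h3
      subst h3
      exact Or.inl ⟨[], .nil, rfl⟩
  | @app t t' s s' p q ihp ihq =>
      intro a ts heq hbd
      have hhd : t.headSym = a := by
        have := congrArg Tm.headSym heq
        simpa [headSym_mkApp, Tm.headSym] using this
      have hargs : t.argsL ++ [s] = ts := by
        have := congrArg Tm.argsL heq
        simpa [argsL_mkApp, Tm.argsL] using this
      have ht : t = mkApp (.sym a) t.argsL := by rw [← hhd]; exact (spine_eta t).symm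
      have hbd' : ∀ F, a = .inr F → t.argsL.length ≤ (G.ntTy F).arity := by
        intro F hF
        have := hbd F hF
        rw [← hargs] at this
        simp at this
        omega
      rcases ihp ht hbd' with ⟨us₀, hfa, rfl⟩ | ⟨F, rfl, e, hl, _, _, _, _⟩
      · refine Or.inl ⟨us₀ ++ [s'], ?_, ?_⟩
        · rw [← hargs]
          exact List.rel_append hfa (List.forall₂_cons.mpr ⟨q, .nil⟩)
        · rw [mkApp_concat]
      · exfalso
        have := hbd F rfl
        rw [← hargs] at this
        simp [hl] at this
  | @head F ts' e us hr hl h ih =>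
      intro a ts heq _
      obtain ⟨rfl, rfl⟩ := mkApp_sym_inj heq.symm
      exact Or.inr ⟨F, rfl, e, hl, us, hr, h, rfl⟩

lemma par_app_inv {l r c : G.T} (h : G.Par (.app l r) c) :
    (∃ l' r', G.Par l l' ∧ G.Par r r' ∧ c = .app l' r') ∨
    (∃ (F : G.Nt) (ts : List G.T) (e : _) (hl : ts.length = (G.ntTy F).arity)
        (us : Fin (G.ntTy F).arity → G.T),
      (.app l r : G.T) = mkApp (.sym (.inr F)) ts ∧ G.rule F = some e ∧
      (∀ i, G.Par (ts.get (Fin.cast hl.symm i)) (us i)) ∧ c = G.inst e us) := by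
  generalize hw : (Tm.app l r : G.T) = w at h
  cases h with
  | sym a => cases hw
  | app p q =>
      injection hw with h1 h2
      subst h1; subst h2
      exact Or.inl ⟨_, _, p, q, rfl⟩
  | head us hr hl hh => exact Or.inr ⟨_, _, _, hl, us, rfl, hr, hh, rfl⟩

end HORS
namespace HORS

variable {G : HORS}

lemma join_head {F : G.Nt} {ts : List G.T} {e}
    (hr : G.rule F = some e) (hl : ts.length = (G.ntTy F).arity)
    (hsub : ∀ x ∈ ts, ∀ b c, G.Par x b → G.Par x c → ∃ d, G.Par b d ∧ G.Par c d)
    {b : G.T} (hb : G.Par (mkApp (.sym (.inr F)) ts) b)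
    (us : Fin (G.ntTy F).arity → G.T)
    (hus : ∀ i, G.Par (ts.get (Fin.cast hl.symm i)) (us i)) :
    ∃ d, G.Par b d ∧ G.Par (G.inst e us) d := by
  have hbd : ∀ F', (Sum.inr F : G.Sig ⊕ G.Nt) = .inr F' → ts.length ≤ (G.ntTy F').arity := by
    intro F' hF'
    injection hF' with hF'
    subst hF'
    exact le_of_eq hl
  rcases par_spine hb rfl hbd with ⟨us', hfa, rfl⟩ | ⟨F', hFF, e', hl', us', hr', hus', rfl⟩
  · -- b = mkApp F us', uncontracted
    have hlen := hfa.length_eq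
    have hl2 : us'.length = (G.ntTy F).arity := by omega
    have hget : ∀ i : Fin (G.ntTy F).arity,
        G.Par (ts.get (Fin.cast hl.symm i)) (us'.get (Fin.cast hl2.symm i)) := by
      intro i
      exact (List.forall₂_iff_get.mp hfa).2 i.val (by omega) (by omega)
    have hws : ∀ i : Fin (G.ntTy F).arity,
        ∃ w, G.Par (us'.get (Fin.cast hl2.symm i)) w ∧ G.Par (us i) w := by
      intro i
      exact hsub _ (List.get_mem _ _) _ _ (hget i) (hus i)
    choose ws hw1 hw2 using hws
    exact ⟨G.inst e ws, Par.head ws hr hl2 hw1, inst_par e hw2⟩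
  · -- b = inst e' us', contracted
    injection hFF with hFF
    subst hFF
    rw [hr] at hr'
    injection hr' with hr'
    subst hr'
    have hws : ∀ i : Fin (G.ntTy F).arity,
        ∃ w, G.Par (us' i) w ∧ G.Par (us i) w := by
      intro i
      have h1 := hus' i
      have h2 := hus i
      exact hsub _ (List.get_mem _ _) _ _ h1 h2
    choose ws hw1 hw2 using hws
    exact ⟨G.inst e ws, inst_par e hw1, inst_par e hw2⟩

lemma par_sym_join {a : G.Sig ⊕ G.Nt} {b c : G.T}
    (hb : G.Par (.sym a) b) (hc : G.Par (.sym a) c) :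
    ∃ d, G.Par b d ∧ G.Par c d := by
  have hinv : ∀ {x : G.T}, G.Par (.sym a) x → x = .sym a ∨
      ∃ (F : G.Nt) (e : _) (hl : (0 : ℕ) = (G.ntTy F).arity)
        (us : Fin (G.ntTy F).arity → G.T),
        a = .inr F ∧ G.rule F = some e ∧ x = G.inst e us := by
    intro x hx
    have : (Tm.sym a : G.T) = mkApp (.sym a) [] := rfl
    rcases par_spine hx this (fun F _ => Nat.zero_le _) with ⟨us, hfa, rfl⟩ |
      ⟨F, rfl, e, hl, us, hr, _, rfl⟩
    · cases hfa
      exact Or.inl rfl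
    · exact Or.inr ⟨F, e, hl, us, rfl, hr, rfl⟩
  have harity_eq : ∀ {F : G.Nt} (hl : (0:ℕ) = (G.ntTy F).arity)
      (us us' : Fin (G.ntTy F).arity → G.T), us = us' := by
    intro F hl us us'
    funext i
    exact (Fin.cast hl.symm i).elim0
  rcases hinv hb with rfl | ⟨F, e, hl, us, rfl, hr, rfl⟩
  · rcases hinv hc with rfl | ⟨F, e, hl, us, rfl, hr, rfl⟩
    · exact ⟨.sym a, Par.refl _, Par.refl _⟩
    · refine ⟨G.inst e us, ?_, Par.refl _⟩
      exact Par.head (ts := []) us hr hl fun i => (Fin.cast hl.symm i).elim0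
  · rcases hinv hc with rfl | ⟨F', e', hl', us', hFF, hr', rfl⟩
    · refine ⟨G.inst e us, Par.refl _, ?_⟩
      exact Par.head (ts := []) us hr hl fun i => (Fin.cast hl.symm i).elim0
    · injection hFF with hFF
      subst hFF
      rw [hr] at hr'
      injection hr' with hr'
      subst hr'
      rw [harity_eq hl us us']
      exact ⟨G.inst e us', Par.refl _, Par.refl _⟩

lemma par_diamond_n : ∀ (n : ℕ) (t : G.T), sizeOf t ≤ n →
    ∀ b c, G.Par t b → G.Par t c → ∃ d, G.Par b d ∧ G.Par c d := by
  intro n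
  induction n with
  | zero =>
      intro t ht
      exact absurd ht (by cases t <;> simp)
  | succ n ih =>
      intro t ht b c hb hc
      rcases t with a | ⟨l, r⟩
      · exact par_sym_join hb hc
      · have hsl : sizeOf l ≤ n := by
          have : sizeOf l < sizeOf (Tm.app l r) := by simp; omega
          omega
        have hsr : sizeOf r ≤ n := by
          have : sizeOf r < sizeOf (Tm.app l r) := by simp
          omega
        have hsub : ∀ {F : G.Nt} {ts : List G.T},
            (Tm.app l r : G.T) = mkApp (.sym (.inr F)) ts →
            ∀ x ∈ ts, ∀ b c, G.Par x b → G.Par x c → ∃ d, G.Par b d ∧ G.Par c d := by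
          intro F ts heq x hx
          have : sizeOf x < sizeOf (Tm.app l r : G.T) := by
            rw [heq]; exact sizeOf_lt_mkApp hx _
          exact ih x (by omega)
        rcases par_app_inv hb with ⟨l1, r1, pl1, pr1, rfl⟩ |
          ⟨F, ts, e, hlen, us, heq, hrul, hpar, rfl⟩
        · rcases par_app_inv hc with ⟨l2, r2, pl2, pr2, rfl⟩ |
            ⟨F, ts, e, hlen, us, heq, hrul, hpar, rfl⟩
          · obtain ⟨d1, h11, h12⟩ := ih l hsl _ _ pl1 pl2
            obtain ⟨d2, h21, h22⟩ := ih r hsr _ _ pr1 pr2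
            exact ⟨.app d1 d2, Par.app h11 h21, Par.app h12 h22⟩
          · obtain ⟨d, h1, h2⟩ :=
              join_head hrul hlen (hsub heq) (heq ▸ hb) us hpar
            exact ⟨d, h1, h2⟩
        · obtain ⟨d, h1, h2⟩ :=
            join_head hrul hlen (hsub heq) (heq ▸ hc) us hpar
          exact ⟨d, h2, h1⟩

lemma par_diamond {t b c : G.T} (hb : G.Par t b) (hc : G.Par t c) :
    ∃ d, G.Par b d ∧ G.Par c d :=
  par_diamond_n (sizeOf t) t le_rfl b c hb hc

end HORS
namespace HORS

variable {G : HORS}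

open Relation

lemma par_strip {a b c : G.T} (h1 : G.Par a b) (h2 : ReflTransGen G.Par a c) :
    ∃ d, ReflTransGen G.Par b d ∧ G.Par c d := by
  induction h2 with
  | refl => exact ⟨b, .refl, h1⟩
  | tail _ hxc ih =>
      obtain ⟨d, hbd, hcd⟩ := ih
      obtain ⟨e, hce, hde⟩ := par_diamond hxc hcd
      exact ⟨e, hbd.tail hde, hce⟩

lemma par_confluent {a b c : G.T} (h1 : ReflTransGen G.Par a b) (h2 : ReflTransGen G.Par a c) :
    ∃ d, ReflTransGen G.Par b d ∧ ReflTransGen G.Par c d := by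
  induction h1 with
  | refl => exact ⟨c, h2, .refl⟩
  | tail _ hxb ih =>
      obtain ⟨d, hbd, hcd⟩ := ih
      obtain ⟨e, hbe, hde⟩ := par_strip hxb hbd
      exact ⟨e, hbe, hcd.tail hde⟩

lemma rtg_step_iff_rtg_par {a b : G.T} :
    ReflTransGen G.Step a b ↔ ReflTransGen G.Par a b := by
  constructor
  · exact ReflTransGen.mono (fun _ _ (h : G.Step _ _) => h.toPar) _ _
  · intro h
    induction h with
    | refl => exact .refl
    | tail _ hxb ih => exact ih.trans hxb.toRTG

lemma step_confluent {a b c : G.T} (h1 : ReflTransGen G.Step a b)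
    (h2 : ReflTransGen G.Step a c) :
    ∃ d, ReflTransGen G.Step b d ∧ ReflTransGen G.Step c d := by
  obtain ⟨d, hbd, hcd⟩ := par_confluent (rtg_step_iff_rtg_par.mp h1) (rtg_step_iff_rtg_par.mp h2)
  exact ⟨d, rtg_step_iff_rtg_par.mpr hbd, rtg_step_iff_rtg_par.mpr hcd⟩

end HORS
lemma TLe.refl {σ : Type} (t : LTree σ) : TLe t t := fun _ x h => ⟨x, h, Or.inr rfl⟩

lemma TLe.trans {σ : Type} {a b c : LTree σ} (h1 : TLe a b) (h2 : TLe b c) : TLe a c := by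
  intro u x hx
  obtain ⟨y, hy, hxy⟩ := h1 u x hx
  obtain ⟨z, hz, hyz⟩ := h2 u y hy
  rcases hxy with rfl | rfl
  · exact ⟨z, hz, Or.inl rfl⟩
  · exact ⟨z, hz, hyz⟩

lemma TLe.antisymm {σ : Type} {a b : LTree σ} (h1 : TLe a b) (h2 : TLe b a) : a = b := by
  funext u
  rcases ha : a u with _ | x
  · rcases hb : b u with _ | y
    · rfl
    · obtain ⟨z, hz, _⟩ := h2 u y hb
      rw [ha] at hz; cases hz
  · obtain ⟨y, hy, hxy⟩ := h1 u x ha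
    rw [hy]
    rcases hxy with rfl | rfl
    · -- x = none
      rcases hy' : y with _ | z
      · rfl
      · exfalso
        obtain ⟨w, hw, hzw⟩ := h2 u y hy
        rw [ha] at hw
        injection hw with hw
        rcases hzw with h' | h'
        · rw [h'] at hy'; cases hy'
        · rw [← h', ← hw] at hy'; cases hy'
    · rfl

namespace HORS

variable {G : HORS}

lemma bt_app_eq (t s : G.T) : G.bt (.app t s) = fun u =>
    match G.bt t [] with
    | some (some _) =>
        match u with
        | [] => G.bt t []
        | j :: v => if j = t.nArgs then G.bt s v else G.bt t u
    | _ => if u = [] then some none else none := rfl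

lemma bt_app_terminal {t : G.T} {a} (h : G.bt t [] = some (some a)) (s : G.T) :
    G.bt (.app t s) = fun u =>
      match u with
      | [] => some (some a)
      | j :: v => if j = t.nArgs then G.bt s v else G.bt t (j :: v) := by
  funext u
  rw [bt_app_eq, h]
  cases u <;> rfl

lemma bt_app_bot {t : G.T} (h : ∀ a, G.bt t [] ≠ some (some a)) (s : G.T) :
    G.bt (.app t s) = fun u => if u = [] then some none else none := by
  funext u
  rw [bt_app_eq]
  rcases hb : G.bt t [] with _ | (_ | a)
  · rfl
  · rfl
  · exact absurd hb (h a)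

lemma bt_nil_isSome (t : G.T) : ∃ x, G.bt t [] = some x := by
  rcases t with (a | F) | ⟨l, r⟩
  · exact ⟨some a, rfl⟩
  · exact ⟨none, rfl⟩
  · rcases hb : G.bt l [] with _ | (_ | a)
    · exact ⟨none, by rw [bt_app_eq]; simp [hb]⟩
    · exact ⟨none, by rw [bt_app_eq]; simp [hb]⟩
    · exact ⟨some a, by rw [bt_app_eq]; simp [hb]⟩

lemma bt_mkApp_nt (F : G.Nt) (ts : List G.T) :
    G.bt (mkApp (.sym (.inr F)) ts) = fun u => if u = [] then some none else none := by
  induction ts using List.reverseRecOn with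
  | nil => rfl
  | append_singleton ts r ih =>
      rw [mkApp_concat]
      apply bt_app_bot
      intro a
      rw [ih]
      simp

lemma TLe_bot (t : G.T) :
    TLe (fun u => if u = [] then some none else none) (G.bt t) := by
  intro u x hx
  by_cases hu : u = []
  · subst hu
    simp at hx
    obtain ⟨y, hy⟩ := bt_nil_isSome t
    exact ⟨y, hy, Or.inl hx.symm⟩
  · simp [hu] at hx

end HORS
namespace HORS

variable {G : HORS}

lemma step_head_terminal {t t' : G.T} (h : G.Step t t') :
    ∀ a, G.bt t [] = some (some a) →
    G.bt t' [] = some (some a) ∧ t'.nArgs = t.nArgs := by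
  induction h with
  | @head F ts e hr hl =>
      intro a hh
      rw [bt_mkApp_nt] at hh
      simp at hh
  | @appL l l' r p ih =>
      intro a hh
      rcases hb : G.bt l [] with _ | (_ | b)
      · rw [bt_app_bot (by simp [hb])] at hh; simp at hh
      · rw [bt_app_bot (by simp [hb])] at hh; simp at hh
      · rw [bt_app_terminal hb] at hh
        simp at hh
        subst hh
        obtain ⟨hb', hn⟩ := ih b hb
        constructor
        · rw [bt_app_terminal hb']
        · show l'.nArgs + 1 = l.nArgs + 1
          omega
  | @appR l r r' p ih =>
      intro a hh
      rcases hb : G.bt l [] with _ | (_ | b)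
      · rw [bt_app_bot (by simp [hb])] at hh; simp at hh
      · rw [bt_app_bot (by simp [hb])] at hh; simp at hh
      · rw [bt_app_terminal hb] at hh
        simp at hh
        subst hh
        exact ⟨by rw [bt_app_terminal hb], rfl⟩

lemma bt_mono {t t' : G.T} (h : G.Step t t') : TLe (G.bt t) (G.bt t') := by
  induction h with
  | @head F ts e hr hl =>
      rw [bt_mkApp_nt]
      exact TLe_bot _
  | @appL l l' r p ih =>
      rcases hb : G.bt l [] with _ | (_ | b)
      · rw [bt_app_bot (by simp [hb])]
        exact TLe_bot _
      · rw [bt_app_bot (by simp [hb])]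
        exact TLe_bot _
      · obtain ⟨hb', hn⟩ := step_head_terminal p b hb
        rw [bt_app_terminal hb, bt_app_terminal hb']
        intro u x hx
        rcases u with _ | ⟨j, v⟩
        · exact ⟨x, hx, Or.inr rfl⟩
        · simp only at hx ⊢
          rw [hn]
          by_cases hj : j = l.nArgs
          · simp only [if_pos hj] at hx ⊢
            exact ⟨x, hx, Or.inr rfl⟩
          · simp only [if_neg hj] at hx ⊢
            exact ih _ _ hx
  | @appR l r r' p ih =>
      rcases hb : G.bt l [] with _ | (_ | b)
      · rw [bt_app_bot (by simp [hb]), bt_app_bot (by simp [hb])]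
        exact TLe.refl _
      · rw [bt_app_bot (by simp [hb]), bt_app_bot (by simp [hb])]
        exact TLe.refl _
      · rw [bt_app_terminal hb, bt_app_terminal hb]
        intro u x hx
        rcases u with _ | ⟨j, v⟩
        · exact ⟨x, hx, Or.inr rfl⟩
        · simp only at hx ⊢
          by_cases hj : j = l.nArgs
          · simp only [if_pos hj] at hx ⊢
            exact ih _ _ hx
          · simp only [if_neg hj] at hx ⊢
            exact ⟨x, hx, Or.inr rfl⟩

lemma bt_mono_rtg {t t' : G.T} (h : Relation.ReflTransGen G.Step t t') :
    TLe (G.bt t) (G.bt t') := by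
  induction h with
  | refl => exact TLe.refl _
  | tail _ hxb ih => exact ih.trans (bt_mono hxb)

end HORS
/-- if t →_G t' then the value trees of the schemes started at
t and t' coincide. -/
theorem valtree_invariant_step (G : HORS) (t t' : G.T) (h : G.Step t t')
    (v v' : LTree G.Sig)
    (hv : IsTreeLub (G.bt '' {s | Relation.ReflTransGen G.Step t s}) v)
    (hv' : IsTreeLub (G.bt '' {s | Relation.ReflTransGen G.Step t' s}) v') :
    v = v' := by
  apply TLe.antisymm
  · apply hv.2
    rintro x ⟨s, hs, rfl⟩
    obtain ⟨d, hsd, htd⟩ := HORS.step_confluent hs (Relation.ReflTransGen.single h)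
    exact (HORS.bt_mono_rtg hsd).trans (hv'.1 _ ⟨d, htd, rfl⟩)
  · apply hv'.2
    rintro x ⟨s, hs, rfl⟩
    exact hv.1 _ ⟨s, Relation.ReflTransGen.head h hs, rfl⟩
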